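/- arXiv:1305.5779 — 3 statements merged into one kernel-verified Lean document; each statement's English description precedes it below -/
import Mathlib

section
/- Fix L ≥ 1, M > 1, and positive constants c₂', c₂, c₃, T, β ∈ (0,1). Consider minimizing the complexity C(N₀,...,N_L) = c₃ T^{-1}(N₀ + ((M+1)/M) Σ_{l=1}^L N_l M^l) over positive reals N₀,...,N_L subject to the variance constraint c₂' N₀^{-1} + c₂ T^β Σ_{l=1}^L N_l^{-1} M^{-lβ} = V for a fixed V > 0. Then the minimizer is N₀ = √λ √(c₂' T / c₃) and N_l = √λ √(c₂/c₃) T^{(1+β)/2} √(M/(M+1)) M^{-l(1+β)/2} for 1 ≤ l ≤ L, where √λ = [√(c₂' c₃ T^{-β}) + √(c₂ c₃) √((M+1)/M) M^{(1-β)/2} (M^{L(1-β)/2} − 1)/(M^{(1-β)/2} − 1)] T^{-(1-β)/2} / V. -/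
open Finset

lemma mlmc_eq_of_sq {A B : ℝ} (hA : 0 ≤ A) (hB : 0 ≤ B) (h : A ^ 2 = B ^ 2) : A = B := by
  rw [← Real.sqrt_sq hA, ← Real.sqrt_sq hB, h]

lemma mlmc_rpow_sq {M : ℝ} (hM : 0 ≤ M) (e : ℝ) : (M ^ e) ^ 2 = M ^ (e * 2) := by
  rw [Real.rpow_mul hM, ← Real.rpow_natCast (M ^ e) 2]; norm_num

lemma mlmc_key {a b μ N : ℝ} (ha : 0 < a) (hb : 0 < b) (hμ : 0 < μ)
    (hN : N = μ * Real.sqrt (a / b)) :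
    a * N⁻¹ = Real.sqrt (a * b) / μ ∧ b * N = μ * Real.sqrt (a * b) := by
  have hsa : (0:ℝ) < Real.sqrt a := Real.sqrt_pos.2 ha
  have hsb : (0:ℝ) < Real.sqrt b := Real.sqrt_pos.2 hb
  have hd : Real.sqrt (a / b) = Real.sqrt a / Real.sqrt b := Real.sqrt_div ha.le b
  have hm : Real.sqrt (a * b) = Real.sqrt a * Real.sqrt b := Real.sqrt_mul ha.le b
  have ha' : Real.sqrt a * Real.sqrt a = a := Real.mul_self_sqrt ha.le
  have hb' : Real.sqrt b * Real.sqrt b = b := Real.mul_self_sqrt hb.le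
  subst hN
  rw [hd, hm]
  constructor
  · rw [eq_div_iff hμ.ne', mul_comm]
    field_simp
    linear_combination (-1 : ℝ) * ha'
  · field_simp
    linear_combination (-1 : ℝ) * hb'

/-- Lagrange optimization of the multilevel Monte Carlo sample sizes: the stated
`N₀, ..., N_L` are positive, satisfy the variance constraint with equality, and
minimize the complexity among all positive sample sizes satisfying the constraint. -/
theorem mlmc_optimal_sample_sizes
    (L : ℕ) (hL : 1 ≤ L) (M c₂' c₂ c₃ T β V : ℝ)
    (hM : 1 < M) (hc₂' : 0 < c₂') (hc₂ : 0 < c₂) (hc₃ : 0 < c₃) (hT : 0 < T)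
    (hβ0 : 0 < β) (hβ1 : β < 1) (hV : 0 < V) :
    ∃ sqrtlam : ℝ,
      sqrtlam = (Real.sqrt (c₂' * c₃ * T ^ (-β)) +
          Real.sqrt (c₂ * c₃) * Real.sqrt ((M + 1) / M) * M ^ ((1 - β) / 2) *
            ((M ^ ((L : ℝ) * (1 - β) / 2) - 1) / (M ^ ((1 - β) / 2) - 1))) *
          T ^ (-(1 - β) / 2) / V ∧
      ∀ Nstar : ℕ → ℝ,
        Nstar 0 = sqrtlam * Real.sqrt (c₂' * T / c₃) →
        (∀ l, 1 ≤ l → l ≤ L →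
          Nstar l = sqrtlam * Real.sqrt (c₂ / c₃) * T ^ ((1 + β) / 2) *
            Real.sqrt (M / (M + 1)) * M ^ (-(l : ℝ) * (1 + β) / 2)) →
        ((∀ l, l ≤ L → 0 < Nstar l) ∧
        c₂' * (Nstar 0)⁻¹ +
            c₂ * T ^ β * ∑ l ∈ Icc 1 L, (Nstar l)⁻¹ * M ^ (-(l : ℝ) * β) = V ∧
        ∀ N : ℕ → ℝ, (∀ l, l ≤ L → 0 < N l) →
          c₂' * (N 0)⁻¹ +
              c₂ * T ^ β * ∑ l ∈ Icc 1 L, (N l)⁻¹ * M ^ (-(l : ℝ) * β) = V →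
          c₃ * T⁻¹ * (Nstar 0 + (M + 1) / M * ∑ l ∈ Icc 1 L, Nstar l * M ^ (l : ℝ)) ≤
            c₃ * T⁻¹ * (N 0 + (M + 1) / M * ∑ l ∈ Icc 1 L, N l * M ^ (l : ℝ))) := by
  have hM0 : (0:ℝ) < M := by linarith
  have hM1 : (0:ℝ) < M + 1 := by linarith
  have hTc : (0:ℝ) < T / c₃ := div_pos hT hc₃
  obtain ⟨x, hxdef⟩ : ∃ x : ℝ, x = M ^ ((1 - β) / 2 : ℝ) := ⟨_, rfl⟩
  have hx0 : 0 < x := hxdef ▸ Real.rpow_pos_of_pos hM0 _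
  have hx1 : 1 < x := by
    rw [hxdef]
    exact (Real.one_lt_rpow_iff_of_pos hM0).2 (Or.inl ⟨hM, by linarith⟩)
  obtain ⟨S, hSdef⟩ : ∃ S : ℝ, S = ∑ l ∈ Icc 1 L, x ^ l := ⟨_, rfl⟩
  have hS0 : 0 < S := hSdef ▸ Finset.sum_pos (fun i _ => pow_pos hx0 i)
    ⟨1, by simp only [Finset.mem_Icc]; omega⟩
  have hxL : M ^ ((L : ℝ) * (1 - β) / 2) = x ^ L := by
    rw [hxdef, ← Real.rpow_natCast (M ^ ((1 - β) / 2 : ℝ)) L, ← Real.rpow_mul hM0.le]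
    ring_nf
  have hgeo : x * ((x ^ L - 1) / (x - 1)) = S := by
    rw [← geom_sum_eq (ne_of_gt hx1), hSdef, ← Finset.Ico_add_one_right_eq_Icc,
      Finset.sum_Ico_eq_sum_range]
    simp only [Nat.add_sub_cancel, Finset.mul_sum]
    exact Finset.sum_congr rfl fun i _ => by rw [pow_add, pow_one]
  obtain ⟨C, hCdef⟩ : ∃ C : ℝ, C = Real.sqrt (c₂ * T ^ (β:ℝ) * ((M + 1) / M)) := ⟨_, rfl⟩
  have hC0 : 0 < C := by rw [hCdef]; exact Real.sqrt_pos.2 (by positivity)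
  obtain ⟨K, hKdef⟩ : ∃ K : ℝ, K = Real.sqrt c₂' + C * S := ⟨_, rfl⟩
  have hK0 : 0 < K := by
    rw [hKdef]
    have := Real.sqrt_pos.2 hc₂'
    nlinarith
  obtain ⟨μ, hμdef⟩ : ∃ μ : ℝ, μ = K / V := ⟨_, rfl⟩
  have hμ0 : 0 < μ := hμdef ▸ div_pos hK0 hV
  obtain ⟨sl, hsldef⟩ : ∃ sl : ℝ, sl = (Real.sqrt (c₂' * c₃ * T ^ (-β)) +
      Real.sqrt (c₂ * c₃) * Real.sqrt ((M + 1) / M) * M ^ ((1 - β) / 2 : ℝ) *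
        ((M ^ ((L : ℝ) * (1 - β) / 2) - 1) / (M ^ ((1 - β) / 2 : ℝ) - 1))) *
      T ^ (-(1 - β) / 2 : ℝ) / V := ⟨_, rfl⟩
  have hslx : sl = (Real.sqrt (c₂' * c₃ * T ^ (-β)) +
      Real.sqrt (c₂ * c₃) * Real.sqrt ((M + 1) / M) * x * ((x ^ L - 1) / (x - 1))) *
      T ^ (-(1 - β) / 2 : ℝ) / V := by
    rw [hsldef, hxL, ← hxdef]
  have e1 : Real.sqrt (c₂' * c₃ * T ^ (-β:ℝ)) * T ^ (-(1 - β) / 2 : ℝ) *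
      Real.sqrt (T / c₃) = Real.sqrt c₂' := by
    apply mlmc_eq_of_sq (by positivity) (Real.sqrt_nonneg _)
    rw [mul_pow, mul_pow, Real.sq_sqrt (by positivity), Real.sq_sqrt hTc.le,
      Real.sq_sqrt hc₂'.le, mlmc_rpow_sq hT.le,
      show (-(1 - β) / 2 * (2:ℝ)) = β - 1 by ring]
    have h5 : T ^ (-β:ℝ) * T ^ (β - 1 : ℝ) * T = 1 := by
      calc T ^ (-β:ℝ) * T ^ (β - 1 : ℝ) * T
          = T ^ (-β:ℝ) * T ^ (β - 1 : ℝ) * T ^ (1:ℝ) := by rw [Real.rpow_one]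
        _ = T ^ ((-β) + (β - 1) + 1 : ℝ) := by rw [← Real.rpow_add hT, ← Real.rpow_add hT]
        _ = 1 := by rw [show ((-β) + (β - 1) + 1 : ℝ) = 0 by ring, Real.rpow_zero]
    have hc3 : c₃ * c₃⁻¹ = 1 := mul_inv_cancel₀ hc₃.ne'
    linear_combination (c₂' * c₃ * c₃⁻¹) * h5 + c₂' * hc3
  have e2 : Real.sqrt (c₂ * c₃) * Real.sqrt ((M + 1) / M) * T ^ (-(1 - β) / 2 : ℝ) *
      Real.sqrt (T / c₃) = C := by
    apply mlmc_eq_of_sq (by positivity) hC0.le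
    rw [mul_pow, mul_pow, mul_pow, Real.sq_sqrt (by positivity : (0:ℝ) ≤ c₂ * c₃),
      Real.sq_sqrt (by positivity : (0:ℝ) ≤ (M + 1) / M), Real.sq_sqrt hTc.le,
      hCdef, Real.sq_sqrt (by positivity), mlmc_rpow_sq hT.le,
      show (-(1 - β) / 2 * (2:ℝ)) = β - 1 by ring]
    have h5 : T ^ (β - 1 : ℝ) * T = T ^ (β:ℝ) := by
      calc T ^ (β - 1 : ℝ) * T = T ^ (β - 1 : ℝ) * T ^ (1:ℝ) := by rw [Real.rpow_one]
        _ = T ^ ((β - 1) + 1 : ℝ) := by rw [← Real.rpow_add hT]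
        _ = T ^ (β:ℝ) := by rw [show ((β - 1) + 1 : ℝ) = β by ring]
    have hc3 : c₃ * c₃⁻¹ = 1 := mul_inv_cancel₀ hc₃.ne'
    linear_combination (c₂ * c₃ * c₃⁻¹ * (M + 1) * M⁻¹) * h5 +
      (c₂ * (T ^ (β:ℝ)) * (M + 1) * M⁻¹) * hc3
  have hmu : sl * Real.sqrt (T / c₃) = μ := by
    rw [hslx, hμdef, hKdef]
    linear_combination (1 / V) * e1 + ((x * ((x ^ L - 1) / (x - 1))) / V) * e2 +
      (C / V) * hgeo
  have hsl0 : 0 < sl := by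
    have hs : (0:ℝ) < Real.sqrt (T / c₃) := Real.sqrt_pos.2 hTc
    nlinarith [hmu, hμ0]
  refine ⟨sl, hsldef, ?_⟩
  intro Nstar h0 hl
  have hNstar0 : Nstar 0 = μ * Real.sqrt c₂' := by
    rw [h0, show c₂' * T / c₃ = c₂' * (T / c₃) by ring, Real.sqrt_mul hc₂'.le, ← hmu]
    ring
  have hsab : ∀ l : ℕ, Real.sqrt ((c₂ * T ^ (β:ℝ) * M ^ (-(l : ℝ) * β)) *
      ((M + 1) / M * M ^ ((l:ℝ)))) = C * x ^ l := by
    intro l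
    apply mlmc_eq_of_sq (Real.sqrt_nonneg _) (by positivity)
    rw [Real.sq_sqrt (by positivity), mul_pow, hCdef, Real.sq_sqrt (by positivity)]
    have hxl2 : (x ^ l) ^ 2 = M ^ ((l:ℝ) * (1 - β)) := by
      rw [hxdef, ← pow_mul, ← Real.rpow_natCast (M ^ ((1 - β) / 2 : ℝ)) (l * 2),
        ← Real.rpow_mul hM0.le]
      push_cast
      ring_nf
    have hMM : M ^ (-(l : ℝ) * β) * M ^ ((l:ℝ)) = M ^ ((l:ℝ) * (1 - β)) := by
      rw [← Real.rpow_add hM0]; ring_nf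
    rw [hxl2]
    linear_combination (c₂ * (T ^ (β:ℝ)) * (M + 1) * M⁻¹) * hMM
  have hNl : ∀ l : ℕ, 1 ≤ l → l ≤ L → Nstar l =
      μ * Real.sqrt ((c₂ * T ^ (β:ℝ) * M ^ (-(l : ℝ) * β)) /
        ((M + 1) / M * M ^ ((l:ℝ)))) := by
    intro l h1 h2
    rw [hl l h1 h2, ← hmu]
    have key : Real.sqrt (c₂ / c₃) * T ^ ((1 + β) / 2 : ℝ) * Real.sqrt (M / (M + 1)) *
        M ^ (-(l : ℝ) * (1 + β) / 2) = Real.sqrt (T / c₃) *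
        Real.sqrt ((c₂ * T ^ (β:ℝ) * M ^ (-(l : ℝ) * β)) /
          ((M + 1) / M * M ^ ((l:ℝ)))) := by
      apply mlmc_eq_of_sq (by positivity) (by positivity)
      rw [mul_pow, mul_pow, mul_pow, mul_pow,
        Real.sq_sqrt (by positivity : (0:ℝ) ≤ c₂ / c₃),
        Real.sq_sqrt (by positivity : (0:ℝ) ≤ M / (M + 1)), Real.sq_sqrt hTc.le,
        Real.sq_sqrt (by positivity), mlmc_rpow_sq hT.le, mlmc_rpow_sq hM0.le,
        show ((1 + β) / 2 * (2:ℝ)) = 1 + β by ring,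
        show (-(l:ℝ) * (1 + β) / 2 * 2) = -(l:ℝ) * (1 + β) by ring]
      have hMl0 : (0:ℝ) < M ^ ((l:ℝ)) := Real.rpow_pos_of_pos hM0 _
      have h5 : T ^ (1 + β : ℝ) = T ^ (β:ℝ) * T := by
        rw [show (1 + β : ℝ) = β + 1 by ring, Real.rpow_add hT, Real.rpow_one]
      have hMM2 : M ^ (-(l : ℝ) * (1 + β)) * M ^ ((l:ℝ)) = M ^ (-(l : ℝ) * β) := by
        rw [← Real.rpow_add hM0]; ring_nf
      have hbb : (M + 1) / M * M ^ ((l:ℝ)) ≠ 0 := ne_of_gt (by positivity)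
      have hMp : (M + 1) * (M + 1)⁻¹ = 1 := mul_inv_cancel₀ hM1.ne'
      have hMm : M * M⁻¹ = 1 := mul_inv_cancel₀ hM0.ne'
      conv_rhs => rw [← mul_div_assoc]
      rw [eq_div_iff hbb]
      linear_combination
        (c₂ * c₃⁻¹ * (M + 1) * (M + 1)⁻¹ * M * M⁻¹ * (M ^ (-(l:ℝ) * (1 + β))) *
          (M ^ ((l:ℝ)))) * h5 +
        (c₂ * c₃⁻¹ * (M + 1) * (M + 1)⁻¹ * M * M⁻¹ * (T ^ (β:ℝ)) * T) * hMM2 +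
        (c₂ * c₃⁻¹ * T * (T ^ (β:ℝ)) * (M ^ (-(l:ℝ) * β)) * (M + 1) * (M + 1)⁻¹) * hMm +
        (c₂ * c₃⁻¹ * T * (T ^ (β:ℝ)) * (M ^ (-(l:ℝ) * β))) * hMp
    linear_combination sl * key
  have hterm : ∀ l ∈ Icc 1 L,
      (c₂ * T ^ (β:ℝ) * M ^ (-(l : ℝ) * β)) * (Nstar l)⁻¹ = C * x ^ l / μ ∧
      ((M + 1) / M * M ^ ((l:ℝ))) * Nstar l = μ * (C * x ^ l) := by
    intro l hli
    obtain ⟨h1, h2⟩ := Finset.mem_Icc.1 hli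
    have ha : (0:ℝ) < c₂ * T ^ (β:ℝ) * M ^ (-(l : ℝ) * β) := by positivity
    have hb : (0:ℝ) < (M + 1) / M * M ^ ((l:ℝ)) := by positivity
    obtain ⟨k1, k2⟩ := mlmc_key ha hb hμ0 (hNl l h1 h2)
    rw [hsab l] at k1 k2
    exact ⟨k1, k2⟩
  have hpos : ∀ l, l ≤ L → 0 < Nstar l := by
    intro l hlL
    rcases Nat.eq_zero_or_pos l with rfl | h1
    · rw [hNstar0]; exact mul_pos hμ0 (Real.sqrt_pos.2 hc₂')
    · rw [hNl l h1 hlL]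
      exact mul_pos hμ0 (Real.sqrt_pos.2 (by positivity))
  have hconstr : c₂' * (Nstar 0)⁻¹ +
      c₂ * T ^ (β:ℝ) * ∑ l ∈ Icc 1 L, (Nstar l)⁻¹ * M ^ (-(l : ℝ) * β) = V := by
    have h00 : c₂' * (Nstar 0)⁻¹ = Real.sqrt c₂' / μ := by
      rw [hNstar0]
      have hs : Real.sqrt c₂' * Real.sqrt c₂' = c₂' := Real.mul_self_sqrt hc₂'.le
      have hs0 : (0:ℝ) < Real.sqrt c₂' := Real.sqrt_pos.2 hc₂'
      have hu : Real.sqrt c₂' * (Real.sqrt c₂')⁻¹ = 1 := mul_inv_cancel₀ hs0.ne'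
      rw [mul_inv, ← mul_assoc]
      linear_combination (-(μ⁻¹ * (Real.sqrt c₂')⁻¹)) * hs +
        (Real.sqrt c₂' * μ⁻¹) * hu
    have hsum : c₂ * T ^ (β:ℝ) * ∑ l ∈ Icc 1 L, (Nstar l)⁻¹ * M ^ (-(l : ℝ) * β) =
        C * S / μ := by
      rw [Finset.mul_sum, hSdef, Finset.mul_sum, Finset.sum_div]
      refine Finset.sum_congr rfl fun l hli => ?_
      linear_combination (hterm l hli).1
    rw [h00, hsum, ← add_div, ← hKdef, hμdef]
    field_simp
  refine ⟨hpos, hconstr, ?_⟩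
  intro N hN hNc
  obtain ⟨af, hafdef⟩ : ∃ af : ℕ → ℝ,
    af = fun l : ℕ => if l = 0 then c₂' else c₂ * T ^ (β:ℝ) * M ^ (-(l : ℝ) * β) := ⟨_, rfl⟩
  obtain ⟨bf, hbfdef⟩ : ∃ bf : ℕ → ℝ,
    bf = fun l : ℕ => if l = 0 then 1 else (M + 1) / M * M ^ ((l:ℝ)) := ⟨_, rfl⟩
  have haf : ∀ l, 0 < af l := by
    intro l; rw [hafdef]; dsimp only; split <;> positivity
  have hbf : ∀ l, 0 < bf l := by
    intro l; rw [hbfdef]; dsimp only; split <;> positivity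
  have haf0 : af 0 = c₂' := by simp [hafdef]
  have hbf0 : bf 0 = 1 := by simp [hbfdef]
  have hafl : ∀ l ∈ Icc 1 L, af l = c₂ * T ^ (β:ℝ) * M ^ (-(l : ℝ) * β) := by
    intro l hli
    have := Finset.mem_Icc.1 hli
    rw [hafdef]; dsimp only; rw [if_neg (by omega)]
  have hbfl : ∀ l ∈ Icc 1 L, bf l = (M + 1) / M * M ^ ((l:ℝ)) := by
    intro l hli
    have := Finset.mem_Icc.1 hli
    rw [hbfdef]; dsimp only; rw [if_neg (by omega)]
  have hsplit : Finset.Icc 0 L = insert 0 (Finset.Icc 1 L) := by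
    ext n; simp only [Finset.mem_Icc, Finset.mem_insert]; omega
  have h0notin : (0:ℕ) ∉ Finset.Icc 1 L := by simp
  have hrK : ∑ l ∈ Icc 0 L, Real.sqrt (af l * bf l) = K := by
    rw [hsplit, Finset.sum_insert h0notin, haf0, hbf0, hKdef, hSdef, Finset.mul_sum,
      mul_one]
    congr 1
    refine Finset.sum_congr rfl fun l hli => ?_
    rw [hafl l hli, hbfl l hli, hsab l]
  have hfa : ∑ l ∈ Icc 0 L, af l * (N l)⁻¹ = V := by
    have hrest : ∑ l ∈ Icc 1 L, af l * (N l)⁻¹ =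
        c₂ * T ^ (β:ℝ) * ∑ l ∈ Icc 1 L, (N l)⁻¹ * M ^ (-(l : ℝ) * β) := by
      rw [Finset.mul_sum]
      refine Finset.sum_congr rfl fun l hli => ?_
      rw [hafl l hli]; ring
    rw [hsplit, Finset.sum_insert h0notin, haf0, hrest, hNc]
  have hga : ∑ l ∈ Icc 0 L, bf l * N l =
      N 0 + (M + 1) / M * ∑ l ∈ Icc 1 L, N l * M ^ ((l:ℝ)) := by
    have hrest : ∑ l ∈ Icc 1 L, bf l * N l =
        (M + 1) / M * ∑ l ∈ Icc 1 L, N l * M ^ ((l:ℝ)) := by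
      rw [Finset.mul_sum]
      refine Finset.sum_congr rfl fun l hli => ?_
      rw [hbfl l hli]; ring
    rw [hsplit, Finset.sum_insert h0notin, hbf0, hrest, one_mul]
  have hCS := Finset.sum_sq_le_sum_mul_sum_of_sq_eq_mul (Finset.Icc 0 L)
    (r := fun l => Real.sqrt (af l * bf l)) (f := fun l => af l * (N l)⁻¹)
    (g := fun l => bf l * N l)
    (fun i hi => by
      have := hN i (Finset.mem_Icc.1 hi).2
      have := haf i
      positivity)
    (fun i hi => by
      have := hN i (Finset.mem_Icc.1 hi).2
      have := hbf i
      positivity)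
    (fun i hi => by
      have hNi := hN i (Finset.mem_Icc.1 hi).2
      rw [Real.sq_sqrt (mul_nonneg (haf i).le (hbf i).le)]
      linear_combination (-(af i * bf i)) * mul_inv_cancel₀ hNi.ne')
  rw [hrK, hfa, hga] at hCS
  have hcostNstar : Nstar 0 + (M + 1) / M * ∑ l ∈ Icc 1 L, Nstar l * M ^ ((l:ℝ)) =
      μ * K := by
    have hsum : (M + 1) / M * ∑ l ∈ Icc 1 L, Nstar l * M ^ ((l:ℝ)) = μ * (C * S) := by
      rw [Finset.mul_sum, hSdef, Finset.mul_sum, Finset.mul_sum]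
      refine Finset.sum_congr rfl fun l hli => ?_
      linear_combination (hterm l hli).2
    rw [hNstar0, hsum, hKdef]; ring
  rw [hcostNstar]
  have hfinal : μ * K ≤ N 0 + (M + 1) / M * ∑ l ∈ Icc 1 L, N l * M ^ ((l:ℝ)) := by
    rw [hμdef, div_mul_eq_mul_div, div_le_iff₀ hV]
    calc K * K = K ^ 2 := (sq K).symm
      _ ≤ V * (N 0 + (M + 1) / M * ∑ l ∈ Icc 1 L, N l * M ^ ((l:ℝ))) := hCS
      _ = (N 0 + (M + 1) / M * ∑ l ∈ Icc 1 L, N l * M ^ ((l:ℝ))) * V := mul_comm _ _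
  have hc : (0:ℝ) < c₃ * T⁻¹ := by positivity
  exact mul_le_mul_of_nonneg_left hfinal hc.le
end

section
/- Let p ≥ 1, let x : [0,T] → E be a continuous path into a metric space of finite p-variation, and let x^h be the piecewise geodesic/linear approximation of x over the uniform grid with mesh h (in the case E = ℝᵈ, piecewise linear interpolation at grid points). Then ‖x^h‖_{p-var;[0,T]} ≤ 3^{1−1/p} ‖x‖_{p-var;[0,T]} and ‖x^h‖_{1/p-Höl;[0,T]} ≤ 3^{1−1/p} ‖x‖_{1/p-Höl;[0,T]}. -/
open Finset

/-- The `p`-variation seminorm of `x` on `[s,t]`. -/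
noncomputable def pVarNorm (p s t : ℝ) {d : ℕ} (x : ℝ → EuclideanSpace ℝ (Fin d)) : ℝ :=
  sSup {r | ∃ n : ℕ, ∃ u : ℕ → ℝ, u 0 = s ∧ u n = t ∧ (∀ i < n, u i ≤ u (i + 1)) ∧
    r = (∑ i ∈ range n, ‖x (u (i + 1)) - x (u i)‖ ^ p) ^ (1 / p)}

/-- The `1/p`-Hölder seminorm of `x` on `[s,t]`. -/
noncomputable def holNorm (p s t : ℝ) {d : ℕ} (x : ℝ → EuclideanSpace ℝ (Fin d)) : ℝ :=
  sSup {r | ∃ u v : ℝ, s ≤ u ∧ u < v ∧ v ≤ t ∧ r = ‖x v - x u‖ / (v - u) ^ (1 / p)}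

/-- Piecewise linear interpolation of `x` over the uniform grid of mesh `h`. -/
noncomputable def pwLinear (h : ℝ) {d : ℕ} (x : ℝ → EuclideanSpace ℝ (Fin d)) :
    ℝ → EuclideanSpace ℝ (Fin d) := fun t =>
  x (h * (⌊t / h⌋ : ℝ)) +
    ((t - h * (⌊t / h⌋ : ℝ)) / h) • (x (h * (⌊t / h⌋ : ℝ) + h) - x (h * (⌊t / h⌋ : ℝ)))

lemma aux_rpow_le_self {t p : ℝ} (h0 : 0 ≤ t) (h1 : t ≤ 1) (hp : 1 ≤ p) : t ^ p ≤ t := by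
  rcases eq_or_lt_of_le h0 with h | h
  · rw [← h, Real.zero_rpow (by linarith)]
  · calc t ^ p ≤ t ^ (1:ℝ) := Real.rpow_le_rpow_of_exponent_ge h h1 hp
    _ = t := Real.rpow_one t

lemma aux_self_le_rpow {t q : ℝ} (h0 : 0 ≤ t) (h1 : t ≤ 1) (hq0 : 0 < q) (hq : q ≤ 1) :
    t ≤ t ^ q := by
  rcases eq_or_lt_of_le h0 with h | h
  · rw [← h, Real.zero_rpow (ne_of_gt hq0)]
  · calc t = t ^ (1:ℝ) := (Real.rpow_one t).symm
      _ ≤ t ^ q := Real.rpow_le_rpow_of_exponent_ge h h1 hq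

lemma aux_add_rpow {a b p : ℝ} (ha : 0 ≤ a) (hb : 0 ≤ b) (hp : 1 ≤ p) :
    a ^ p + b ^ p ≤ (a + b) ^ p := by
  rcases eq_or_lt_of_le (by linarith : (0:ℝ) ≤ a + b) with h | h
  · have ha0 : a = 0 := by linarith
    have hb0 : b = 0 := by linarith
    simp [ha0, hb0, Real.zero_rpow (by linarith : p ≠ 0)]
  · have h1 : (a/(a+b)) ^ p + (b/(a+b)) ^ p ≤ 1 := by
      have e1 := aux_rpow_le_self (t := a/(a+b)) (by positivity)
        (by rw [div_le_one h]; linarith) hp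
      have e2 := aux_rpow_le_self (t := b/(a+b)) (by positivity)
        (by rw [div_le_one h]; linarith) hp
      have : a/(a+b) + b/(a+b) = 1 := by field_simp
      linarith
    have h2 : (a/(a+b)) ^ p = a ^ p / (a+b) ^ p := Real.div_rpow ha (le_of_lt h) p
    have h3 : (b/(a+b)) ^ p = b ^ p / (a+b) ^ p := Real.div_rpow hb (le_of_lt h) p
    rw [h2, h3, ← add_div, div_le_one (by positivity)] at h1
    exact h1

lemma aux_add3_rpow {a b c p : ℝ} (ha : 0 ≤ a) (hb : 0 ≤ b) (hc : 0 ≤ c) (hp : 1 ≤ p) :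
    (a + b + c) ^ p ≤ 3 ^ (p - 1) * (a ^ p + b ^ p + c ^ p) := by
  have key := Real.rpow_arith_mean_le_arith_mean_rpow Finset.univ
    (fun _ : Fin 3 => (3:ℝ)⁻¹) ![a, b, c]
    (fun i _ => by positivity) (by simp [Finset.sum_const])
    (fun i _ => by fin_cases i <;> simpa) hp
  have hsum : ∑ i : Fin 3, (3:ℝ)⁻¹ * (![a,b,c] i) = (3:ℝ)⁻¹ * (a + b + c) := by
    simp [Fin.sum_univ_three]; ring
  have hsum2 : ∑ i : Fin 3, (3:ℝ)⁻¹ * (![a,b,c] i) ^ p = (3:ℝ)⁻¹ * (a^p + b^p + c^p) := by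
    simp [Fin.sum_univ_three]; ring
  rw [hsum, hsum2] at key
  have habc : 0 ≤ a + b + c := by linarith
  have key2 : ((3:ℝ)⁻¹) ^ p * (a+b+c) ^ p ≤ (3:ℝ)⁻¹ * (a^p + b^p + c^p) := by
    rwa [Real.mul_rpow (by positivity) habc] at key
  have h3p : ((3:ℝ)⁻¹) ^ p = ((3:ℝ) ^ p)⁻¹ := Real.inv_rpow (by norm_num) p
  have hpos : (0:ℝ) < (3:ℝ) ^ p := Real.rpow_pos_of_pos (by norm_num) p
  have key3 : (a+b+c) ^ p ≤ (3:ℝ) ^ p * ((3:ℝ)⁻¹ * (a^p + b^p + c^p)) := by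
    rw [h3p] at key2
    calc (a+b+c)^p = (3:ℝ)^p * (((3:ℝ)^p)⁻¹ * (a+b+c)^p) := by field_simp
      _ ≤ (3:ℝ)^p * ((3:ℝ)⁻¹ * (a^p+b^p+c^p)) := by
          apply mul_le_mul_of_nonneg_left key2 (le_of_lt hpos)
  calc (a+b+c)^p ≤ (3:ℝ)^p * ((3:ℝ)⁻¹ * (a^p + b^p + c^p)) := key3
    _ = 3 ^ (p-1) * (a^p+b^p+c^p) := by
        rw [Real.rpow_sub (by norm_num), Real.rpow_one]; ring

lemma aux_rpow_add3 {a b c q : ℝ} (ha : 0 ≤ a) (hb : 0 ≤ b) (hc : 0 ≤ c)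
    (hq0 : 0 < q) (hq : q ≤ 1) :
    a ^ q + b ^ q + c ^ q ≤ 3 ^ (1 - q) * (a + b + c) ^ q := by
  have hp : 1 ≤ 1/q := by rw [le_div_iff₀ hq0]; linarith
  have h := aux_add3_rpow (Real.rpow_nonneg ha q) (Real.rpow_nonneg hb q)
    (Real.rpow_nonneg hc q) hp
  have e : ∀ t : ℝ, 0 ≤ t → (t ^ q) ^ (1/q) = t := by
    intro t ht
    rw [one_div, Real.rpow_rpow_inv ht (ne_of_gt hq0)]
  rw [e a ha, e b hb, e c hc] at h
  have hS : 0 ≤ a ^ q + b ^ q + c ^ q := by positivity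
  have h2 := Real.rpow_le_rpow (Real.rpow_nonneg hS (1/q)) h (le_of_lt hq0)
  have e2 : ((a ^ q + b ^ q + c ^ q) ^ (1/q)) ^ q = a ^ q + b ^ q + c ^ q := by
    rw [one_div, Real.rpow_inv_rpow hS (ne_of_gt hq0)]
  have e3 : ((3:ℝ) ^ (1/q - 1) * (a + b + c)) ^ q
      = 3 ^ (1 - q) * (a + b + c) ^ q := by
    rw [Real.mul_rpow (by positivity) (by linarith),
      ← Real.rpow_mul (by norm_num : (0:ℝ) ≤ 3)]
    congr 1
    field_simp
  rw [e2, e3] at h2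
  exact h2

lemma pw_same {d : ℕ} (x : ℝ → EuclideanSpace ℝ (Fin d)) {h s t : ℝ}
    (hst : ⌊s/h⌋ = ⌊t/h⌋) :
    pwLinear h x t - pwLinear h x s
      = ((t - s)/h) • (x (h * (⌊s/h⌋:ℝ) + h) - x (h * (⌊s/h⌋:ℝ))) := by
  simp only [pwLinear, ← hst]
  module

lemma pw_cross {d : ℕ} (x : ℝ → EuclideanSpace ℝ (Fin d)) (h s t : ℝ) :
    pwLinear h x t - pwLinear h x s =
      ((t - h*(⌊t/h⌋:ℝ))/h) • (x (h*(⌊t/h⌋:ℝ) + h) - x (h*(⌊t/h⌋:ℝ)))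
      + (x (h*(⌊t/h⌋:ℝ)) - x (h*(⌊s/h⌋:ℝ) + h))
      + (1 - (s - h*(⌊s/h⌋:ℝ))/h) • (x (h*(⌊s/h⌋:ℝ) + h) - x (h*(⌊s/h⌋:ℝ))) := by
  simp only [pwLinear]
  module

lemma grid_le {h : ℝ} (hh : 0 < h) (t : ℝ) : h * (⌊t/h⌋:ℝ) ≤ t := by
  have h1 : ((⌊t/h⌋ : ℤ) : ℝ) ≤ t/h := Int.floor_le _
  calc h * (⌊t/h⌋:ℝ) ≤ h * (t/h) := by
        exact mul_le_mul_of_nonneg_left h1 (le_of_lt hh)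
    _ = t := by field_simp

lemma lt_grid {h : ℝ} (hh : 0 < h) (t : ℝ) : t < h * (⌊t/h⌋:ℝ) + h := by
  have h1 : t/h < (⌊t/h⌋:ℝ) + 1 := Int.lt_floor_add_one _
  calc t = h * (t/h) := by field_simp
    _ < h * ((⌊t/h⌋:ℝ) + 1) := by exact (mul_lt_mul_iff_right₀ hh).mpr h1
    _ = h * (⌊t/h⌋:ℝ) + h := by ring

lemma pvar_same {d : ℕ} (x : ℝ → EuclideanSpace ℝ (Fin d)) {p h s t : ℝ}
    (hp : 1 ≤ p) (hh : 0 < h) (hst : s ≤ t) (hfl : ⌊s/h⌋ = ⌊t/h⌋) :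
    ‖pwLinear h x t - pwLinear h x s‖^p
      + ((s - h*(⌊s/h⌋:ℝ))/h)^p * ‖x (h*(⌊s/h⌋:ℝ) + h) - x (h*(⌊s/h⌋:ℝ))‖^p
    ≤ ((t - h*(⌊t/h⌋:ℝ))/h)^p * ‖x (h*(⌊t/h⌋:ℝ) + h) - x (h*(⌊t/h⌋:ℝ))‖^p := by
  rw [← hfl]
  rw [pw_same x hfl]
  have hδ : 0 ≤ (t - s)/h := by apply div_nonneg; linarith; linarith
  have hρ : 0 ≤ (s - h*(⌊s/h⌋:ℝ))/h := by
    apply div_nonneg _ (le_of_lt hh); linarith [grid_le hh s]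
  rw [norm_smul_of_nonneg hδ, Real.mul_rpow hδ (norm_nonneg _)]
  have key : ((t-s)/h)^p + ((s - h*(⌊s/h⌋:ℝ))/h)^p ≤ ((t - h*(⌊s/h⌋:ℝ))/h)^p := by
    have := aux_add_rpow hδ hρ hp
    have e : (t-s)/h + (s - h*(⌊s/h⌋:ℝ))/h = (t - h*(⌊s/h⌋:ℝ))/h := by ring
    rwa [e] at this
  have hW : (0:ℝ) ≤ ‖x (h*(⌊s/h⌋:ℝ) + h) - x (h*(⌊s/h⌋:ℝ))‖^p := by positivity
  nlinarith [key, hW, mul_le_mul_of_nonneg_right key hW]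

lemma pvar_cross {d : ℕ} (x : ℝ → EuclideanSpace ℝ (Fin d)) {p h s t : ℝ}
    (hp : 1 ≤ p) (hh : 0 < h) (hst : s ≤ t) :
    ‖pwLinear h x t - pwLinear h x s‖^p
      + 3^(p-1) * (((s - h*(⌊s/h⌋:ℝ))/h)^p * ‖x (h*(⌊s/h⌋:ℝ) + h) - x (h*(⌊s/h⌋:ℝ))‖^p)
    ≤ 3^(p-1) * (‖x (h*(⌊s/h⌋:ℝ) + h) - x (h*(⌊s/h⌋:ℝ))‖^p
        + ‖x (h*(⌊t/h⌋:ℝ)) - x (h*(⌊s/h⌋:ℝ) + h)‖^p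
        + ((t - h*(⌊t/h⌋:ℝ))/h)^p * ‖x (h*(⌊t/h⌋:ℝ) + h) - x (h*(⌊t/h⌋:ℝ))‖^p) := by
  set Gs := h*(⌊s/h⌋:ℝ) with hGs
  set Gt := h*(⌊t/h⌋:ℝ) with hGt
  set Rs := (s - Gs)/h with hRs
  set Rt := (t - Gt)/h with hRt
  set Ws := ‖x (Gs + h) - x Gs‖ with hWs
  set M := ‖x Gt - x (Gs + h)‖ with hM
  set Wt := ‖x (Gt + h) - x Gt‖ with hWt
  have hRs0 : 0 ≤ Rs := by
    rw [hRs]; apply div_nonneg _ (le_of_lt hh); rw [hGs]; linarith [grid_le hh s]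
  have hRs1 : Rs ≤ 1 := by
    rw [hRs, div_le_one hh, hGs]; linarith [lt_grid hh s]
  have hRt0 : 0 ≤ Rt := by
    rw [hRt]; apply div_nonneg _ (le_of_lt hh); rw [hGt]; linarith [grid_le hh t]
  have hnorm : ‖pwLinear h x t - pwLinear h x s‖ ≤ (1 - Rs) * Ws + M + Rt * Wt := by
    rw [pw_cross x h s t]
    calc ‖_ + _ + _‖ ≤ ‖Rt • (x (Gt + h) - x Gt)‖ + ‖x Gt - x (Gs + h)‖
        + ‖(1 - Rs) • (x (Gs + h) - x Gs)‖ := norm_add₃_le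
      _ = Rt * Wt + M + (1 - Rs) * Ws := by
          rw [norm_smul_of_nonneg hRt0, norm_smul_of_nonneg (by linarith)]
      _ = (1 - Rs) * Ws + M + Rt * Wt := by ring
  have hrb : ‖pwLinear h x t - pwLinear h x s‖^p ≤ ((1 - Rs) * Ws + M + Rt * Wt)^p :=
    Real.rpow_le_rpow (norm_nonneg _) hnorm (by linarith)
  have h3 := aux_add3_rpow (a := (1-Rs)*Ws) (b := M) (c := Rt*Wt)
    (mul_nonneg (by linarith) (norm_nonneg _)) (norm_nonneg _)
    (mul_nonneg hRt0 (norm_nonneg _)) hp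
  rw [Real.mul_rpow (by linarith) (norm_nonneg _), Real.mul_rpow hRt0 (norm_nonneg _)] at h3
  have hone : Rs^p + (1-Rs)^p ≤ 1 := by
    have e1 := aux_rpow_le_self hRs0 hRs1 hp
    have e2 := aux_rpow_le_self (t := 1 - Rs) (by linarith) (by linarith) hp
    linarith
  have hWsp : (0:ℝ) ≤ Ws^p := by positivity
  have h3p0 : (0:ℝ) ≤ 3^(p-1) := by positivity
  nlinarith [mul_le_mul_of_nonneg_right hone hWsp, hrb, h3,
    mul_le_mul_of_nonneg_left (mul_le_mul_of_nonneg_right hone hWsp) h3p0]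

lemma pw_cross_norm {d : ℕ} (x : ℝ → EuclideanSpace ℝ (Fin d)) {h s t : ℝ} (hh : 0 < h) :
    ‖pwLinear h x t - pwLinear h x s‖ ≤
      (1 - (s - h*(⌊s/h⌋:ℝ))/h) * ‖x (h*(⌊s/h⌋:ℝ) + h) - x (h*(⌊s/h⌋:ℝ))‖
      + ‖x (h*(⌊t/h⌋:ℝ)) - x (h*(⌊s/h⌋:ℝ) + h)‖
      + ((t - h*(⌊t/h⌋:ℝ))/h) * ‖x (h*(⌊t/h⌋:ℝ) + h) - x (h*(⌊t/h⌋:ℝ))‖ := by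
  have hRs1 : (s - h*(⌊s/h⌋:ℝ))/h ≤ 1 := by
    rw [div_le_one hh]; linarith [lt_grid hh s]
  have hRt0 : 0 ≤ (t - h*(⌊t/h⌋:ℝ))/h := by
    apply div_nonneg _ (le_of_lt hh); linarith [grid_le hh t]
  rw [pw_cross x h s t]
  calc ‖_ + _ + _‖ ≤ ‖((t - h*(⌊t/h⌋:ℝ))/h) • (x (h*(⌊t/h⌋:ℝ) + h) - x (h*(⌊t/h⌋:ℝ)))‖
      + ‖x (h*(⌊t/h⌋:ℝ)) - x (h*(⌊s/h⌋:ℝ) + h)‖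
      + ‖(1 - (s - h*(⌊s/h⌋:ℝ))/h) • (x (h*(⌊s/h⌋:ℝ) + h) - x (h*(⌊s/h⌋:ℝ)))‖ := norm_add₃_le
    _ = ((t - h*(⌊t/h⌋:ℝ))/h) * ‖x (h*(⌊t/h⌋:ℝ) + h) - x (h*(⌊t/h⌋:ℝ))‖
      + ‖x (h*(⌊t/h⌋:ℝ)) - x (h*(⌊s/h⌋:ℝ) + h)‖
      + (1 - (s - h*(⌊s/h⌋:ℝ))/h) * ‖x (h*(⌊s/h⌋:ℝ) + h) - x (h*(⌊s/h⌋:ℝ))‖ := by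
        rw [norm_smul_of_nonneg hRt0, norm_smul_of_nonneg (by linarith)]
    _ = _ := by ring

set_option maxHeartbeats 2000000

/-- Piecewise linear approximation does not increase the `p`-variation and the
`1/p`-Hölder seminorms by more than the factor `3^{1−1/p}`. -/
theorem pwLinear_norm_bounds (d : ℕ) (p T h : ℝ) (hp : 1 ≤ p) (hT : 0 < T)
    (hh : 0 < h) (hgrid : ∃ n : ℕ, T = n * h)
    (x : ℝ → EuclideanSpace ℝ (Fin d)) (hx : Continuous x)
    (hpvar : BddAbove {r | ∃ n : ℕ, ∃ u : ℕ → ℝ, u 0 = 0 ∧ u n = T ∧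
      (∀ i < n, u i ≤ u (i + 1)) ∧
      r = (∑ i ∈ range n, ‖x (u (i + 1)) - x (u i)‖ ^ p) ^ (1 / p)})
    (hhol : BddAbove {r | ∃ u v : ℝ, 0 ≤ u ∧ u < v ∧ v ≤ T ∧
      r = ‖x v - x u‖ / (v - u) ^ (1 / p)}) :
    pVarNorm p 0 T (pwLinear h x) ≤ 3 ^ (1 - 1 / p) * pVarNorm p 0 T x ∧
    holNorm p 0 T (pwLinear h x) ≤ 3 ^ (1 - 1 / p) * holNorm p 0 T x := by
  obtain ⟨m, hm⟩ := hgrid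
  have hp0 : (0:ℝ) < p := by linarith
  have hq0 : (0:ℝ) < 1/p := by positivity
  have hq1 : 1/p ≤ 1 := by rw [div_le_one hp0]; linarith
  have h3q : (1:ℝ) ≤ 3 ^ (1 - 1/p) := by
    calc (1:ℝ) = 3 ^ (0:ℝ) := (Real.rpow_zero 3).symm
      _ ≤ 3 ^ (1 - 1/p) := Real.rpow_le_rpow_of_exponent_le (by norm_num) (by linarith)
  have h3p : (1:ℝ) ≤ 3 ^ (p - 1) := by
    calc (1:ℝ) = 3 ^ (0:ℝ) := (Real.rpow_zero 3).symm
      _ ≤ 3 ^ (p - 1) := Real.rpow_le_rpow_of_exponent_le (by norm_num) (by linarith)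
  -- lower bounds for the seminorms of x
  have hV0 : 0 ≤ pVarNorm p 0 T x := by
    have hmem : (∑ i ∈ range 1, ‖x ((fun i => if i = 0 then 0 else T) (i+1)) -
        x ((fun i => if i = 0 then 0 else T) i)‖ ^ p) ^ (1/p) ∈
        {r | ∃ n : ℕ, ∃ u : ℕ → ℝ, u 0 = 0 ∧ u n = T ∧ (∀ i < n, u i ≤ u (i + 1)) ∧
          r = (∑ i ∈ range n, ‖x (u (i + 1)) - x (u i)‖ ^ p) ^ (1 / p)} := by
      exact ⟨1, fun i => if i = 0 then 0 else T, by simp, by simp, by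
        intro i hi; interval_cases i; simp; linarith, rfl⟩
    have := le_csSup hpvar hmem
    refine le_trans ?_ this
    apply Real.rpow_nonneg
    apply Finset.sum_nonneg
    intro i _
    positivity
  have hH0 : 0 ≤ holNorm p 0 T x := by
    have hmem : ‖x T - x 0‖ / (T - 0) ^ (1/p) ∈
        {r | ∃ u v : ℝ, 0 ≤ u ∧ u < v ∧ v ≤ T ∧ r = ‖x v - x u‖ / (v - u) ^ (1 / p)} :=
      ⟨0, T, le_refl 0, hT, le_refl T, rfl⟩
    have := le_csSup hhol hmem
    refine le_trans ?_ this
    exact div_nonneg (norm_nonneg _) (le_of_lt (Real.rpow_pos_of_pos (by linarith) _))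
  -- key fact: any dissection sum of x is ≤ V^p
  have KV : ∀ (N : ℕ) (w : ℕ → ℝ), w 0 = 0 → w N = T → (∀ i < N, w i ≤ w (i+1)) →
      ∑ i ∈ range N, ‖x (w (i+1)) - x (w i)‖ ^ p ≤ (pVarNorm p 0 T x) ^ p := by
    intro N w hw0 hwN hwm
    have hmem : (∑ i ∈ range N, ‖x (w (i+1)) - x (w i)‖ ^ p) ^ (1/p) ∈
        {r | ∃ n : ℕ, ∃ u : ℕ → ℝ, u 0 = 0 ∧ u n = T ∧ (∀ i < n, u i ≤ u (i + 1)) ∧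
          r = (∑ i ∈ range n, ‖x (u (i + 1)) - x (u i)‖ ^ p) ^ (1 / p)} :=
      ⟨N, w, hw0, hwN, hwm, rfl⟩
    have hle := le_csSup hpvar hmem
    have hS : (0:ℝ) ≤ ∑ i ∈ range N, ‖x (w (i+1)) - x (w i)‖ ^ p := by
      apply Finset.sum_nonneg; intro i _; positivity
    calc ∑ i ∈ range N, ‖x (w (i+1)) - x (w i)‖ ^ p
        = ((∑ i ∈ range N, ‖x (w (i+1)) - x (w i)‖ ^ p) ^ ((1:ℝ)/p)) ^ p := by
          rw [one_div, Real.rpow_inv_rpow hS (ne_of_gt hp0)]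
      _ ≤ (pVarNorm p 0 T x) ^ p :=
          Real.rpow_le_rpow (Real.rpow_nonneg hS _) hle (le_of_lt hp0)
  -- key fact: Hölder bound for x
  have KH : ∀ a b : ℝ, 0 ≤ a → a ≤ b → b ≤ T →
      ‖x b - x a‖ ≤ holNorm p 0 T x * (b - a) ^ (1/p) := by
    intro a b ha hab hbT
    rcases eq_or_lt_of_le hab with h' | h'
    · rw [← h', sub_self, sub_self, Real.zero_rpow (ne_of_gt hq0), mul_zero, norm_zero]
    · have hmem : ‖x b - x a‖ / (b - a) ^ (1/p) ∈
          {r | ∃ u v : ℝ, 0 ≤ u ∧ u < v ∧ v ≤ T ∧ r = ‖x v - x u‖ / (v - u) ^ (1 / p)} :=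
        ⟨a, b, ha, h', hbT, rfl⟩
      have hle := le_csSup hhol hmem
      have hpow : (0:ℝ) < (b - a) ^ (1/p) := Real.rpow_pos_of_pos (by linarith) _
      rw [div_le_iff₀ hpow] at hle
      exact hle
  constructor
  · -- p-variation bound
    show sSup _ ≤ _
    apply Real.sSup_le
    · rintro r ⟨n, u, hu0, hun, humono, rfl⟩
      have key : ∀ j, j ≤ n → ∃ N : ℕ, ∃ w : ℕ → ℝ, w 0 = 0 ∧
          w N = h * (⌊u j / h⌋ : ℝ) ∧ (∀ i < N, w i ≤ w (i+1)) ∧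
          ∑ i ∈ range j, ‖pwLinear h x (u (i+1)) - pwLinear h x (u i)‖ ^ p ≤
            3 ^ (p - 1) * (∑ i ∈ range N, ‖x (w (i+1)) - x (w i)‖ ^ p +
              ((u j - h * (⌊u j / h⌋:ℝ))/h) ^ p *
                ‖x (h * (⌊u j / h⌋:ℝ) + h) - x (h * (⌊u j / h⌋:ℝ))‖ ^ p) := by
        intro j
        induction j with
        | zero =>
          intro _
          refine ⟨0, fun _ => 0, rfl, ?_, fun i hi => absurd hi (Nat.not_lt_zero i), ?_⟩
          · rw [hu0]; norm_num
          · rw [hu0]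
            simp [Real.zero_rpow (ne_of_gt hp0)]
        | succ j ih =>
          intro hj1
          obtain ⟨N, w, hw0, hwN, hwm, hsum⟩ := ih (by omega)
          have hjn : j < n := by omega
          have huj : u j ≤ u (j+1) := humono j hjn
          have hfm : (⌊u j / h⌋ : ℤ) ≤ ⌊u (j+1) / h⌋ := Int.floor_mono (by gcongr)
          have hnn : (0:ℝ) ≤ ‖pwLinear h x (u (j+1)) - pwLinear h x (u j)‖ ^ p := by
            positivity
          rcases eq_or_lt_of_le hfm with hfl | hflt
          · -- same cell
            refine ⟨N, w, hw0, by rw [hwN, hfl], hwm, ?_⟩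
            rw [Finset.sum_range_succ]
            have step := pvar_same x hp hh huj hfl
            have hAB : ((u j - h * (⌊u j / h⌋:ℝ))/h) ^ p *
                ‖x (h * (⌊u j / h⌋:ℝ) + h) - x (h * (⌊u j / h⌋:ℝ))‖ ^ p ≤
                ((u (j+1) - h * (⌊u (j+1) / h⌋:ℝ))/h) ^ p *
                ‖x (h * (⌊u (j+1) / h⌋:ℝ) + h) - x (h * (⌊u (j+1) / h⌋:ℝ))‖ ^ p := by
              linarith [step, hnn]
            nlinarith [hsum, step, hnn, hAB,
              mul_nonneg (sub_nonneg.mpr h3p) (sub_nonneg.mpr hAB)]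
          · -- crossing a grid point
            refine ⟨N+2, (fun i => if i ≤ N then w i
                else if i = N+1 then h * (⌊u j / h⌋:ℝ) + h
                else h * (⌊u (j+1) / h⌋:ℝ)), ?_, ?_, ?_, ?_⟩
            · simpa using hw0
            · beta_reduce
              rw [if_neg (by omega : ¬ N + 2 ≤ N), if_neg (by omega : ¬ N + 2 = N + 1)]
            · intro i hi
              beta_reduce
              rcases Nat.lt_or_ge i N with hiN | hiN
              · rw [if_pos (by omega : i ≤ N), if_pos (by omega : i + 1 ≤ N)]
                exact hwm i hiN
              · rcases Nat.eq_or_lt_of_le hiN with hiN' | hiN'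
                · rw [if_pos (by omega : i ≤ N), if_neg (by omega : ¬ i + 1 ≤ N),
                    if_pos (by omega : i + 1 = N + 1), ← hiN', hwN]
                  linarith
                · have hie : i = N + 1 := by omega
                  rw [if_neg (by omega : ¬ i ≤ N), if_pos hie,
                    if_neg (by omega : ¬ i + 1 ≤ N), if_neg (by omega : ¬ i + 1 = N + 1)]
                  have hc : ((⌊u j / h⌋ : ℤ):ℝ) + 1 ≤ ((⌊u (j+1) / h⌋ : ℤ):ℝ) := by
                    have : (⌊u j / h⌋ : ℤ) + 1 ≤ ⌊u (j+1) / h⌋ := hflt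
                    exact_mod_cast this
                  nlinarith
            · beta_reduce
              rw [Finset.sum_range_succ, Finset.sum_range_succ]
              have e1 : (∑ i ∈ range N, ‖x (if i + 1 ≤ N then w (i+1)
                    else if i + 1 = N+1 then h * (⌊u j / h⌋:ℝ) + h
                    else h * (⌊u (j+1) / h⌋:ℝ)) -
                  x (if i ≤ N then w i
                    else if i = N+1 then h * (⌊u j / h⌋:ℝ) + h
                    else h * (⌊u (j+1) / h⌋:ℝ))‖ ^ p)
                  = ∑ i ∈ range N, ‖x (w (i+1)) - x (w i)‖ ^ p := by
                apply Finset.sum_congr rfl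
                intro i hi
                have hi' : i < N := Finset.mem_range.mp hi
                rw [if_pos (by omega : i ≤ N), if_pos (by omega : i + 1 ≤ N)]
              rw [Finset.sum_range_succ, e1, if_pos (le_refl N), if_neg (by omega : ¬ N + 1 ≤ N),
                if_pos rfl, if_neg (by omega : ¬ N + 1 + 1 ≤ N),
                if_neg (by omega : ¬ N + 1 + 1 = N + 1), hwN]
              have step := pvar_cross x hp hh huj (s := u j) (t := u (j+1))
              nlinarith [hsum, step, hnn]
      obtain ⟨N, w, hw0, hwN, hwm, hsum⟩ := key n le_rfl
      have hfT : (⌊u n / h⌋ : ℝ) = (m:ℝ) := by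
        rw [hun, hm, mul_div_cancel_right₀ _ (ne_of_gt hh)]
        norm_num
      have hGT : h * (⌊u n / h⌋:ℝ) = T := by rw [hfT, hm]; ring
      have hR0 : ((u n - h * (⌊u n / h⌋:ℝ))/h) ^ p = 0 := by
        rw [hGT, hun, sub_self, zero_div, Real.zero_rpow (ne_of_gt hp0)]
      rw [hR0, zero_mul, add_zero] at hsum
      have hKV := KV N w hw0 (by rw [hwN, hGT]) hwm
      have hbound : ∑ i ∈ range n, ‖pwLinear h x (u (i+1)) - pwLinear h x (u i)‖ ^ p ≤
          3 ^ (p-1) * (pVarNorm p 0 T x) ^ p := by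
        calc ∑ i ∈ range n, ‖pwLinear h x (u (i+1)) - pwLinear h x (u i)‖ ^ p
            ≤ 3 ^ (p-1) * ∑ i ∈ range N, ‖x (w (i+1)) - x (w i)‖ ^ p := hsum
          _ ≤ 3 ^ (p-1) * (pVarNorm p 0 T x) ^ p := by
              apply mul_le_mul_of_nonneg_left hKV (by positivity)
      have hS0 : (0:ℝ) ≤ ∑ i ∈ range n, ‖pwLinear h x (u (i+1)) - pwLinear h x (u i)‖ ^ p := by
        apply Finset.sum_nonneg; intro i _; positivity
      calc (∑ i ∈ range n, ‖pwLinear h x (u (i+1)) - pwLinear h x (u i)‖ ^ p) ^ (1/p)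
          ≤ (3 ^ (p-1) * (pVarNorm p 0 T x) ^ p) ^ (1/p) :=
            Real.rpow_le_rpow hS0 hbound (le_of_lt hq0)
        _ = 3 ^ (1 - 1/p) * pVarNorm p 0 T x := by
            rw [Real.mul_rpow (by positivity) (Real.rpow_nonneg hV0 p)]
            congr 1
            · rw [← Real.rpow_mul (by norm_num : (0:ℝ) ≤ 3)]
              congr 1
              field_simp
            · rw [one_div, Real.rpow_rpow_inv hV0 (ne_of_gt hp0)]
    · exact mul_nonneg (by positivity) hV0
  · -- Hölder bound
    show sSup _ ≤ _
    apply Real.sSup_le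
    · rintro r ⟨s, t, hs0, hst, htT, rfl⟩
      have hts0 : (0:ℝ) < t - s := by linarith
      rw [div_le_iff₀ (Real.rpow_pos_of_pos hts0 _)]
      have hfm : (⌊s / h⌋ : ℤ) ≤ ⌊t / h⌋ := Int.floor_mono (by gcongr)
      have ha0 : (0:ℤ) ≤ ⌊s / h⌋ := Int.floor_nonneg.mpr (div_nonneg hs0 (le_of_lt hh))
      have hbm : (⌊t / h⌋ : ℤ) ≤ (m:ℤ) := by
        have h1 : t / h ≤ (m:ℝ) := by
          rw [div_le_iff₀ hh]; rw [hm] at htT; linarith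
        calc (⌊t / h⌋ : ℤ) ≤ ⌊(m:ℝ)⌋ := Int.floor_mono h1
          _ = (m:ℤ) := Int.floor_natCast m
      have ham : (⌊s / h⌋ : ℤ) < (m:ℤ) := by
        have h1 : ((⌊s / h⌋:ℤ):ℝ) ≤ s / h := Int.floor_le _
        have h2 : s / h < (m:ℝ) := by
          rw [div_lt_iff₀ hh]; rw [hm] at htT; linarith
        exact_mod_cast lt_of_le_of_lt h1 h2
      have hH0' : (0:ℝ) ≤ holNorm p 0 T x * h ^ (1/p) :=
        mul_nonneg hH0 (le_of_lt (Real.rpow_pos_of_pos hh _))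
      have hhq : (h:ℝ) ^ (1/p) ≠ 0 := ne_of_gt (Real.rpow_pos_of_pos hh _)
      have Wbound : ∀ k : ℤ, 0 ≤ k → k + 1 ≤ (m:ℤ) →
          ‖x (h * (k:ℝ) + h) - x (h * (k:ℝ))‖ ≤ holNorm p 0 T x * h ^ (1/p) := by
        intro k hk0 hk1
        have e : h * (k:ℝ) + h - h * (k:ℝ) = h := by ring
        have h1 : (0:ℝ) ≤ h * (k:ℝ) := mul_nonneg (le_of_lt hh) (by exact_mod_cast hk0)
        have h2 : h * (k:ℝ) + h ≤ T := by
          have h3 : ((k:ℝ) + 1) ≤ (m:ℝ) := by exact_mod_cast hk1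
          rw [hm]; nlinarith
        have h4 := KH (h * (k:ℝ)) (h * (k:ℝ) + h) h1 (by linarith) h2
        rwa [e] at h4
      have edge : ∀ c : ℝ, 0 ≤ c → c ≤ 1 →
          c * (holNorm p 0 T x * h ^ (1/p)) ≤ holNorm p 0 T x * (c * h) ^ (1/p) := by
        intro c hc0 hc1
        calc c * (holNorm p 0 T x * h ^ (1/p))
            ≤ c ^ (1/p) * (holNorm p 0 T x * h ^ (1/p)) :=
              mul_le_mul_of_nonneg_right (aux_self_le_rpow hc0 hc1 hq0 hq1) hH0'
          _ = holNorm p 0 T x * (c * h) ^ (1/p) := by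
              rw [Real.mul_rpow hc0 (le_of_lt hh)]; ring
      rcases eq_or_lt_of_le hfm with hfl | hflt
      · -- same cell
        rw [pw_same x hfl]
        have hts1 : (t - s)/h ≤ 1 := by
          rw [div_le_one hh]
          have h1 := lt_grid hh t
          have h2 := grid_le hh s
          rw [← hfl] at h1
          linarith
        have htsd : (0:ℝ) ≤ (t - s)/h := div_nonneg (by linarith) (le_of_lt hh)
        have hWa := Wbound ⌊s/h⌋ ha0 (by omega)
        calc ‖((t - s)/h) • (x (h * (⌊s/h⌋:ℝ) + h) - x (h * (⌊s/h⌋:ℝ)))‖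
            = ((t - s)/h) * ‖x (h * (⌊s/h⌋:ℝ) + h) - x (h * (⌊s/h⌋:ℝ))‖ :=
              norm_smul_of_nonneg htsd _
          _ ≤ ((t - s)/h) * (holNorm p 0 T x * h ^ (1/p)) :=
              mul_le_mul_of_nonneg_left hWa htsd
          _ ≤ holNorm p 0 T x * (((t - s)/h) * h) ^ (1/p) := edge _ htsd hts1
          _ = holNorm p 0 T x * (t - s) ^ (1/p) := by
              rw [div_mul_cancel₀ _ (ne_of_gt hh)]
          _ ≤ 3 ^ (1 - 1/p) * holNorm p 0 T x * (t - s) ^ (1/p) := by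
              have hx0 : (0:ℝ) ≤ holNorm p 0 T x * (t - s) ^ (1/p) :=
                mul_nonneg hH0 (le_of_lt (Real.rpow_pos_of_pos hts0 _))
              nlinarith [hx0, h3q]
      · -- crossing
        have hab1 : (⌊s / h⌋ : ℤ) + 1 ≤ ⌊t / h⌋ := hflt
        have hab1' : ((⌊s / h⌋ : ℤ):ℝ) + 1 ≤ ((⌊t / h⌋ : ℤ):ℝ) := by exact_mod_cast hab1
        have hbm' : ((⌊t / h⌋ : ℤ):ℝ) ≤ (m:ℝ) := by exact_mod_cast hbm
        have hb0 : (0:ℤ) ≤ ⌊t / h⌋ := le_trans ha0 hfm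
        have hGs0 : (0:ℝ) ≤ h * ((⌊s / h⌋ : ℤ):ℝ) :=
          mul_nonneg (le_of_lt hh) (by exact_mod_cast ha0)
        have hGsGt : h * ((⌊s / h⌋ : ℤ):ℝ) + h ≤ h * ((⌊t / h⌋ : ℤ):ℝ) := by nlinarith
        have hGtT : h * ((⌊t / h⌋ : ℤ):ℝ) ≤ T := by rw [hm]; nlinarith
        -- the three pieces
        have B1 : (1 - (s - h*(⌊s/h⌋:ℝ))/h) * ‖x (h*(⌊s/h⌋:ℝ) + h) - x (h*(⌊s/h⌋:ℝ))‖
            ≤ holNorm p 0 T x * (h*(⌊s/h⌋:ℝ) + h - s) ^ (1/p) := by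
          have hc0 : (0:ℝ) ≤ 1 - (s - h*(⌊s/h⌋:ℝ))/h := by
            have h1 : (s - h*(⌊s/h⌋:ℝ))/h ≤ 1 := by
              rw [div_le_one hh]; linarith [lt_grid hh s]
            linarith
          have hc1 : 1 - (s - h*(⌊s/h⌋:ℝ))/h ≤ 1 := by
            have h1 : 0 ≤ (s - h*(⌊s/h⌋:ℝ))/h :=
              div_nonneg (by linarith [grid_le hh s]) (le_of_lt hh)
            linarith
          have hWs := Wbound ⌊s/h⌋ ha0 (by omega)
          have e : (1 - (s - h*(⌊s/h⌋:ℝ))/h) * h = h*(⌊s/h⌋:ℝ) + h - s := by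
            field_simp
            ring
          calc (1 - (s - h*(⌊s/h⌋:ℝ))/h) * ‖x (h*(⌊s/h⌋:ℝ) + h) - x (h*(⌊s/h⌋:ℝ))‖
              ≤ (1 - (s - h*(⌊s/h⌋:ℝ))/h) * (holNorm p 0 T x * h ^ (1/p)) :=
                mul_le_mul_of_nonneg_left hWs hc0
            _ ≤ holNorm p 0 T x * ((1 - (s - h*(⌊s/h⌋:ℝ))/h) * h) ^ (1/p) := edge _ hc0 hc1
            _ = holNorm p 0 T x * (h*(⌊s/h⌋:ℝ) + h - s) ^ (1/p) := by rw [e]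
        have B2 : ‖x (h*(⌊t/h⌋:ℝ)) - x (h*(⌊s/h⌋:ℝ) + h)‖
            ≤ holNorm p 0 T x * (h*(⌊t/h⌋:ℝ) - (h*(⌊s/h⌋:ℝ) + h)) ^ (1/p) :=
          KH _ _ (by linarith) hGsGt hGtT
        have B3 : ((t - h*(⌊t/h⌋:ℝ))/h) * ‖x (h*(⌊t/h⌋:ℝ) + h) - x (h*(⌊t/h⌋:ℝ))‖
            ≤ holNorm p 0 T x * (t - h*(⌊t/h⌋:ℝ)) ^ (1/p) := by
          have hRt0 : (0:ℝ) ≤ (t - h*(⌊t/h⌋:ℝ))/h :=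
            div_nonneg (by linarith [grid_le hh t]) (le_of_lt hh)
          rcases eq_or_lt_of_le hRt0 with hRt | hRt
          · have ht0 : t - h*(⌊t/h⌋:ℝ) = 0 := by
              have := hRt.symm
              rw [div_eq_zero_iff] at this
              rcases this with h1 | h1
              · exact h1
              · exact absurd h1 (ne_of_gt hh)
            rw [ht0, zero_div, zero_mul, Real.zero_rpow (ne_of_gt hq0), mul_zero]
          · have hGtlt : h*(⌊t/h⌋:ℝ) < t := by
              by_contra hcon
              push_neg at hcon
              have : (t - h*(⌊t/h⌋:ℝ))/h ≤ 0 := div_nonpos_of_nonpos_of_nonneg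
                (by linarith) (le_of_lt hh)
              linarith
            have hbm2 : (⌊t / h⌋ : ℤ) + 1 ≤ (m:ℤ) := by
              by_contra hcon
              push_neg at hcon
              have hbe : (⌊t / h⌋ : ℤ) = (m:ℤ) := by omega
              have : h*(⌊t/h⌋:ℝ) = T := by
                rw [hm]
                have : ((⌊t / h⌋ : ℤ):ℝ) = (m:ℝ) := by exact_mod_cast hbe
                rw [this]; ring
              linarith
            have hWt := Wbound ⌊t/h⌋ hb0 hbm2
            have hc1 : (t - h*(⌊t/h⌋:ℝ))/h ≤ 1 := by
              rw [div_le_one hh]; linarith [lt_grid hh t]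
            calc ((t - h*(⌊t/h⌋:ℝ))/h) * ‖x (h*(⌊t/h⌋:ℝ) + h) - x (h*(⌊t/h⌋:ℝ))‖
                ≤ ((t - h*(⌊t/h⌋:ℝ))/h) * (holNorm p 0 T x * h ^ (1/p)) :=
                  mul_le_mul_of_nonneg_left hWt hRt0
              _ ≤ holNorm p 0 T x * (((t - h*(⌊t/h⌋:ℝ))/h) * h) ^ (1/p) := edge _ hRt0 hc1
              _ = holNorm p 0 T x * (t - h*(⌊t/h⌋:ℝ)) ^ (1/p) := by
                  rw [div_mul_cancel₀ _ (ne_of_gt hh)]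
        have hδ1 : (0:ℝ) ≤ h*(⌊s/h⌋:ℝ) + h - s := by linarith [lt_grid hh s]
        have hδ2 : (0:ℝ) ≤ h*(⌊t/h⌋:ℝ) - (h*(⌊s/h⌋:ℝ) + h) := by linarith
        have hδ3 : (0:ℝ) ≤ t - h*(⌊t/h⌋:ℝ) := by linarith [grid_le hh t]
        have hsum3 := aux_rpow_add3 hδ1 hδ2 hδ3 hq0 hq1
        have hδe : (h*(⌊s/h⌋:ℝ) + h - s) + (h*(⌊t/h⌋:ℝ) - (h*(⌊s/h⌋:ℝ) + h))
            + (t - h*(⌊t/h⌋:ℝ)) = t - s := by ring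
        rw [hδe] at hsum3
        calc ‖pwLinear h x t - pwLinear h x s‖
            ≤ (1 - (s - h*(⌊s/h⌋:ℝ))/h) * ‖x (h*(⌊s/h⌋:ℝ) + h) - x (h*(⌊s/h⌋:ℝ))‖
              + ‖x (h*(⌊t/h⌋:ℝ)) - x (h*(⌊s/h⌋:ℝ) + h)‖
              + ((t - h*(⌊t/h⌋:ℝ))/h) * ‖x (h*(⌊t/h⌋:ℝ) + h) - x (h*(⌊t/h⌋:ℝ))‖ :=
              pw_cross_norm x hh
          _ ≤ holNorm p 0 T x * ((h*(⌊s/h⌋:ℝ) + h - s) ^ (1/p)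
              + (h*(⌊t/h⌋:ℝ) - (h*(⌊s/h⌋:ℝ) + h)) ^ (1/p)
              + (t - h*(⌊t/h⌋:ℝ)) ^ (1/p)) := by
              rw [mul_add, mul_add]
              exact add_le_add (add_le_add B1 B2) B3
          _ ≤ holNorm p 0 T x * (3 ^ (1 - 1/p) * (t - s) ^ (1/p)) :=
              mul_le_mul_of_nonneg_left hsum3 hH0
          _ = 3 ^ (1 - 1/p) * holNorm p 0 T x * (t - s) ^ (1/p) := by ring
    · exact mul_nonneg (by positivity) hH0
end

section
/- Let a, q, c > 0, M > 1, p ∈ ℝ with p + qL > 0 for L large, and consider the equation M^{cL} / (p + qL) = ε^{-2} for the unknown L = L(ε) as ε ↓ 0. Then L(ε) = y/(c log M) + log(p + qy/(c log M))/(c log M) + O(log y / y) as y := log ε^{-2} → ∞. In particular, L(ε) = (log ε^{-1})·2/(c log M) + O(log log ε^{-1}). -/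
open Real Filter Set Asymptotics

open Real Filter Set Asymptotics

/-- Growth estimate for `φ L = m L - log (p + q L)` on the region where `p+qL ≥ R ≥ 2q/m`. -/
lemma mlmc_phi_growth (m q p R : ℝ) (hm : 0 < m) (hq : 0 < q)
    (hR2 : 2 * q / m ≤ R) {x z : ℝ} (hx : R ≤ p + q * x) (hxz : x ≤ z) :
    m / 2 * (z - x) ≤ (m * z - log (p + q * z)) - (m * x - log (p + q * x)) := by
  have hR0 : 0 < R := lt_of_lt_of_le (by positivity) hR2
  have hpx : 0 < p + q * x := lt_of_lt_of_le hR0 hx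
  have hpz : 0 < p + q * z := by nlinarith
  have hlog : log (p + q * z) - log (p + q * x) ≤ m / 2 * (z - x) := by
    rw [← Real.log_div (ne_of_gt hpz) (ne_of_gt hpx)]
    have h1 : log ((p + q * z) / (p + q * x)) ≤ (p + q * z) / (p + q * x) - 1 :=
      Real.log_le_sub_one_of_pos (by positivity)
    have h2 : (p + q * z) / (p + q * x) - 1 = q * (z - x) / (p + q * x) := by
      field_simp; ring
    rw [h2] at h1
    refine h1.trans ?_
    rw [div_le_iff₀ hpx]
    -- q(z-x) ≤ m/2 (z-x)(p+qx), with p+qx ≥ R ≥ 2q/m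
    nlinarith [mul_nonneg (mul_nonneg (le_of_lt hm) (sub_nonneg.mpr hxz)) (sub_nonneg.mpr hx),
      (div_le_iff₀ hm).mp hR2]
  nlinarith

/-- Existence of a solution of `m L - log(p+qL) = y` for `y ≥ φ L1`, with an a priori bound. -/
lemma mlmc_exists_sol (m q p R L1 : ℝ) (hm : 0 < m) (hq : 0 < q)
    (hR1 : 1 ≤ R) (hR2 : 2 * q / m ≤ R) (hL1 : p + q * L1 = R)
    {y : ℝ} (hy : m * L1 - log (p + q * L1) ≤ y) :
    ∃ L, L1 ≤ L ∧ L ≤ L1 + 2 * (y - (m * L1 - log (p + q * L1))) / m + 1 ∧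
      m * L - log (p + q * L) = y := by
  set φ : ℝ → ℝ := fun L => m * L - log (p + q * L) with hφ
  set B : ℝ := L1 + 2 * (y - φ L1) / m + 1 with hB
  have hyB : φ L1 ≤ y := hy
  have hLB : L1 ≤ B := by
    have : 0 ≤ 2 * (y - φ L1) / m := div_nonneg (by linarith) hm.le
    simp only [hB]; linarith
  have hgrow : m / 2 * (B - L1) ≤ φ B - φ L1 :=
    mlmc_phi_growth m q p R hm hq hR2 (by rw [hL1]) hLB
  have hφB : y ≤ φ B := by
    have hgrow' : m / 2 * (B - L1) ≤ (m * B - log (p + q * B)) - (m * L1 - log (p + q * L1)) := hgrow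
    have hcalc : m / 2 * (B - L1) = (y - (m * L1 - log (p + q * L1))) + m / 2 := by
      simp only [hB, hφ]; field_simp; ring
    show y ≤ m * B - log (p + q * B)
    linarith
  have hcont : ContinuousOn φ (Icc L1 B) := by
    apply ContinuousOn.sub (Continuous.continuousOn (by continuity))
    apply Real.continuousOn_log.comp
      (Continuous.continuousOn (by continuity))
    intro x hx
    have : R ≤ p + q * x := by
      rw [← hL1]; have := hx.1; nlinarith
    simp only [mem_compl_iff, mem_singleton_iff]
    nlinarith
  have := intermediate_value_Icc hLB hcont (mem_Icc.mpr ⟨hyB, hφB⟩)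
  obtain ⟨L, hLmem, hLeq⟩ := this
  exact ⟨L, hLmem.1, hLmem.2, hLeq⟩

open Real Filter Set Asymptotics

set_option maxHeartbeats 1000000 in
lemma mlmc_main (m q p : ℝ) (hm : 0 < m) (hq : 0 < q) :
    ∃ Λ : ℝ → ℝ, ∀ᶠ y in atTop,
      (m * Λ y - log (p + q * Λ y) = y ∧ 0 < p + q * Λ y) ∧
      |Λ y - (y / m + log (p + q * y / m) / m)| ≤ (4 / m) * |log y / y| ∧
      |Λ y - y / m| ≤ (4 / m) * |log (y / 2)| := by
  set R : ℝ := max 1 (2 * q / m) with hR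
  set L1 : ℝ := (R - p) / q with hL1def
  have hR1 : (1:ℝ) ≤ R := le_max_left _ _
  have hR2 : 2 * q / m ≤ R := le_max_right _ _
  have hL1 : p + q * L1 = R := by rw [hL1def, mul_div_assoc', mul_div_cancel_left₀ _ (ne_of_gt hq)]; ring
  set y0 : ℝ := m * L1 - log (p + q * L1) with hy0
  classical
  refine ⟨fun y => if h : y0 ≤ y then
      (mlmc_exists_sol m q p R L1 hm hq hR1 hR2 hL1 h).choose else L1, ?_⟩
  set Λ : ℝ → ℝ := fun y => if h : y0 ≤ y then
      (mlmc_exists_sol m q p R L1 hm hq hR1 hR2 hL1 h).choose else L1 with hΛ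
  set C₀ : ℝ := L1 + 1 - 2 * y0 / m with hC₀
  have hev : ∀ᶠ y in atTop, y0 ≤ y ∧ (4:ℝ) ≤ y ∧
      max 0 (p + q * C₀) + 2 * q / m ≤ y ∧ 0 ≤ p + q * (y / (2 * m)) := by
    have h4 := eventually_ge_atTop (4:ℝ)
    have h1 := eventually_ge_atTop y0
    have h2 := eventually_ge_atTop (max 0 (p + q * C₀) + 2 * q / m)
    have h3 : ∀ᶠ y in atTop, 0 ≤ p + q * (y / (2 * m)) := by
      have h3' := eventually_ge_atTop ((-p) * (2 * m) / q)
      filter_upwards [h3'] with y hy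
      rw [div_le_iff₀ hq] at hy
      have h2m : (0:ℝ) < 2 * m := by positivity
      have h5 : -p ≤ y * q / (2 * m) := by rw [le_div_iff₀ h2m]; linarith
      have h6 : q * (y / (2 * m)) = y * q / (2 * m) := by ring
      linarith [h6 ▸ h5]
    filter_upwards [h1, h4, h2, h3] with y a b c d
    exact ⟨a, b, c, d⟩
  filter_upwards [hev] with y ⟨hy0y, h4y, hquad, hplin⟩
  -- unpack the choice
  have hspec := (mlmc_exists_sol m q p R L1 hm hq hR1 hR2 hL1 hy0y).choose_spec
  have hΛy : Λ y = (mlmc_exists_sol m q p R L1 hm hq hR1 hR2 hL1 hy0y).choose := by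
    simp only [hΛ, dif_pos hy0y]
  rw [← hΛy] at hspec
  obtain ⟨hlb, hub, heq⟩ := hspec
  clear hΛy hev hΛ hR hL1def
  clear_value Λ
  clear_value C₀
  clear_value y0
  clear_value L1
  clear_value R
  rw [← hy0] at hub
  have hy1 : (1:ℝ) ≤ y := by linarith
  have hypos : (0:ℝ) < y := by linarith
  -- basic positivity facts
  have hpqR : R ≤ p + q * Λ y := by rw [← hL1]; nlinarith
  have hpq1 : (1:ℝ) ≤ p + q * Λ y := le_trans hR1 hpqR
  have hpq0 : (0:ℝ) < p + q * Λ y := lt_of_lt_of_le one_pos hpq1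
  have hlog0 : 0 ≤ log (p + q * Λ y) := log_nonneg hpq1
  -- Λ y - y/m = log(p+qΛ)/m
  have hkey : Λ y - y / m = log (p + q * Λ y) / m := by
    rw [eq_div_iff (ne_of_gt hm), sub_mul, div_mul_cancel₀ _ (ne_of_gt hm)]
    linarith
  have hlow : y / m ≤ Λ y := by
    rw [← sub_nonneg, hkey]; positivity
  -- upper bound: Λ y ≤ C₀ + (2/m) * y
  have hub' : Λ y ≤ C₀ + (2 / m) * y := by
    have : Λ y ≤ L1 + 2 * (y - y0) / m + 1 := hub
    have h2 : L1 + 2 * (y - y0) / m + 1 = C₀ + (2 / m) * y := by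
      simp only [hC₀]; field_simp; ring
    linarith [h2 ▸ this]
  -- p + q Λ y ≤ y^2
  have hquad' : p + q * Λ y ≤ y * y := by
    have hA : p + q * Λ y ≤ (p + q * C₀) + (2 * q / m) * y := by
      have := hub'
      have h2 : q * Λ y ≤ q * (C₀ + (2 / m) * y) := by nlinarith
      have h3 : q * (C₀ + (2 / m) * y) = q * C₀ + (2 * q / m) * y := by ring
      linarith [h3 ▸ h2]
    have hA2 : p + q * C₀ ≤ max 0 (p + q * C₀) := le_max_right _ _
    have hA3 : (0:ℝ) ≤ max 0 (p + q * C₀) := le_max_left _ _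
    have hB0 : (0:ℝ) ≤ 2 * q / m := div_nonneg (by positivity) hm.le
    have hint1 : 0 ≤ max 0 (p + q * C₀) * (y - 1) := mul_nonneg hA3 (by linarith)
    have hint2 : (max 0 (p + q * C₀) + 2 * q / m) * y ≤ y * y :=
      mul_le_mul_of_nonneg_right hquad (le_of_lt hypos)
    have hBy : 0 * y ≤ (2 * q / m) * y := mul_le_mul_of_nonneg_right hB0 (le_of_lt hypos)
    generalize hAgen : max 0 (p + q * C₀) = A at hA2 hA3 hint1 hint2
    nlinarith [hint1, hint2, hA, hA2, hA3, hBy]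
  -- log bound
  have hlogy0 : 0 ≤ log y := log_nonneg hy1
  have hlog2 : log (p + q * Λ y) ≤ 2 * log y := by
    calc log (p + q * Λ y) ≤ log (y * y) := log_le_log hpq0 hquad'
    _ = 2 * log y := by rw [log_mul (ne_of_gt hypos) (ne_of_gt hypos)]; ring
  refine ⟨⟨heq, hpq0⟩, ?_, ?_⟩
  · -- first estimate
    have hden : q * (y / (2 * m)) ≤ p + q * y / m := by
      have : p + q * y / m = (p + q * (y / (2 * m))) + q * (y / (2 * m)) := by
        field_simp; ring
      linarith [this]
    have hdenpos : 0 < p + q * y / m := by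
      have : 0 < q * (y / (2 * m)) := by positivity
      linarith
    have hmono : p + q * y / m ≤ p + q * Λ y := by
      have : q * (y / m) ≤ q * Λ y := by nlinarith
      have h2 : q * y / m = q * (y / m) := by ring
      linarith [h2 ▸ this]
    have hD : Λ y - (y / m + log (p + q * y / m) / m)
        = (log (p + q * Λ y) - log (p + q * y / m)) / m := by
      rw [sub_div, ← hkey]; ring
    rw [hD]
    have hratio : log (p + q * Λ y) - log (p + q * y / m)
        = log ((p + q * Λ y) / (p + q * y / m)) := by
      rw [log_div (ne_of_gt hpq0) (ne_of_gt hdenpos)]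
    have hr1 : (1:ℝ) ≤ (p + q * Λ y) / (p + q * y / m) := by
      rw [le_div_iff₀ hdenpos]; linarith
    have hupper : log ((p + q * Λ y) / (p + q * y / m)) ≤ 4 * (log y / y) := by
      have h1 : log ((p + q * Λ y) / (p + q * y / m))
          ≤ (p + q * Λ y) / (p + q * y / m) - 1 :=
        log_le_sub_one_of_pos (by positivity)
      have h2 : (p + q * Λ y) / (p + q * y / m) - 1
          = q * (Λ y - y / m) / (p + q * y / m) := by
        rw [div_sub_one (ne_of_gt hdenpos)]
        ring
      rw [h2] at h1
      refine h1.trans ?_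
      -- q (Λ - y/m) / (p + qy/m) ≤ q (2 log y/m) / (q y /(2m)) = 4 log y / y
      have hnum : q * (Λ y - y / m) ≤ q * (2 * log y / m) := by
        have := hkey
        have h3 : log (p + q * Λ y) / m ≤ 2 * log y / m := by
          gcongr
        nlinarith [hkey ▸ h3]
      have hden2 : q * (y / (2 * m)) ≤ p + q * y / m := hden
      have hdpos : (0:ℝ) < q * (y / (2 * m)) := by positivity
      calc q * (Λ y - y / m) / (p + q * y / m)
          ≤ q * (2 * log y / m) / (q * (y / (2 * m))) := by
            apply div_le_div₀ (by positivity) hnum hdpos hden2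
        _ = 4 * (log y / y) := by field_simp; ring
    have hlower : 0 ≤ log ((p + q * Λ y) / (p + q * y / m)) := log_nonneg hr1
    rw [abs_div, abs_of_nonneg (by rw [hratio]; exact hlower), abs_of_pos hm]
    rw [div_le_iff₀ hm]
    have habs : |log y / y| = log y / y := abs_of_nonneg (by positivity)
    rw [habs, hratio]
    calc log ((p + q * Λ y) / (p + q * y / m)) ≤ 4 * (log y / y) := hupper
      _ = 4 / m * (log y / y) * m := by field_simp
  · -- second estimate
    have hlog2half : log y ≤ 2 * log (y / 2) := by
      have h2 : log (y / 2) = log y - log 2 := by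
        rw [log_div (ne_of_gt hypos) (by norm_num)]
      have h3 : log 2 ≤ log (y / 2) := by
        apply log_le_log (by norm_num)
        linarith
      linarith
    have hhalfpos : 0 ≤ log (y / 2) := by
      apply log_nonneg; linarith
    rw [hkey, abs_div, abs_of_nonneg hlog0, abs_of_pos hm, abs_of_nonneg hhalfpos]
    rw [div_le_iff₀ hm]
    calc log (p + q * Λ y) ≤ 2 * log y := hlog2
      _ ≤ 4 * log (y / 2) := by linarith
      _ = 4 / m * log (y / 2) * m := by field_simp
/-- Asymptotic expansion of the optimal number of levels `L(ε)` solving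
`M^{cL}/(p+qL) = ε^{-2}` as `ε ↓ 0`: with `y = log ε^{-2}`,
`L(ε) = y/(c log M) + log(p + q y/(c log M))/(c log M) + O(log y / y)`; in
particular `L(ε) = 2 log ε^{-1}/(c log M) + O(log log ε^{-1})`. -/
theorem optimal_level_asymptotics (a q c p M : ℝ)
    (ha : 0 < a) (hq : 0 < q) (hc : 0 < c) (hM : 1 < M) :
    ∃ L : ℝ → ℝ,
      (∀ᶠ ε in nhdsWithin 0 (Ioi (0 : ℝ)),
        M ^ (c * L ε) / (p + q * L ε) = ε ^ (-2 : ℝ)) ∧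
      (fun ε => L ε - (log (ε ^ (-2 : ℝ)) / (c * log M) +
          log (p + q * log (ε ^ (-2 : ℝ)) / (c * log M)) / (c * log M)))
        =O[nhdsWithin 0 (Ioi (0 : ℝ))]
        (fun ε => log (log (ε ^ (-2 : ℝ))) / log (ε ^ (-2 : ℝ))) ∧
      (fun ε => L ε - 2 * log ε⁻¹ / (c * log M))
        =O[nhdsWithin 0 (Ioi (0 : ℝ))] (fun ε => log (log ε⁻¹)) := by
  have hm : 0 < c * log M := mul_pos hc (log_pos hM)
  obtain ⟨Λ, hΛ⟩ := mlmc_main (c * log M) q p hm hq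
  have hM0 : (0:ℝ) < M := lt_trans one_pos hM
  -- y(ε) = log (ε^(-2)) → ∞ as ε → 0⁺
  have hy : Tendsto (fun ε : ℝ => log (ε ^ (-2:ℝ))) (nhdsWithin 0 (Ioi (0:ℝ))) atTop := by
    have h1 : Tendsto (fun ε : ℝ => (-2:ℝ) * log ε) (nhdsWithin 0 (Ioi (0:ℝ))) atTop :=
      Real.tendsto_log_nhdsGT_zero.const_mul_atBot_of_neg (by norm_num)
    refine h1.congr' ?_
    filter_upwards [self_mem_nhdsWithin] with ε (hε : 0 < ε)
    rw [Real.log_rpow hε]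
  refine ⟨fun ε => Λ (log (ε ^ (-2:ℝ))), ?_, ?_, ?_⟩
  · filter_upwards [hy.eventually hΛ, self_mem_nhdsWithin] with ε hp (hε : 0 < ε)
    obtain ⟨⟨heq, hpos⟩, -, -⟩ := hp
    set y := log (ε ^ (-2:ℝ))
    have h1 : M ^ (c * Λ y) = Real.exp (c * log M * Λ y) := by
      rw [Real.rpow_def_of_pos hM0]; ring_nf
    rw [h1, ← Real.exp_log hpos, ← Real.exp_sub, heq,
      Real.exp_log (Real.rpow_pos_of_pos hε _)]
  · rw [isBigO_iff]
    refine ⟨4 / (c * log M), ?_⟩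
    filter_upwards [hy.eventually hΛ] with ε hp
    obtain ⟨-, h1, -⟩ := hp
    simpa [Real.norm_eq_abs, abs_of_pos hm, abs_div] using h1
  · rw [isBigO_iff]
    refine ⟨4 / (c * log M), ?_⟩
    filter_upwards [hy.eventually hΛ, self_mem_nhdsWithin] with ε hp (hε : 0 < ε)
    obtain ⟨-, -, h2⟩ := hp
    have hlogeq : log (ε ^ (-2:ℝ)) = 2 * log ε⁻¹ := by
      rw [Real.log_rpow hε, Real.log_inv]; ring
    have h3 : log (ε ^ (-2:ℝ)) / 2 = log ε⁻¹ := by rw [hlogeq]; ring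
    have h4 : log (ε ^ (-2:ℝ)) / (c * log M) = 2 * log ε⁻¹ / (c * log M) := by
      rw [hlogeq]
    rw [Real.norm_eq_abs, Real.norm_eq_abs, ← h4, ← h3]
    calc |Λ (log (ε ^ (-2:ℝ))) - log (ε ^ (-2:ℝ)) / (c * log M)|
        ≤ 4 / (c * log M) * |log (log (ε ^ (-2:ℝ)) / 2)| := h2
      _ = 4 / (c * log M) * |log (log (ε ^ (-2:ℝ)) / 2)| := rfl
end
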